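/- arXiv:math/0603168 — 3 statements merged into one kernel-verified Lean document; each statement's English description precedes it below -/
import Mathlib

section
/- Let F be Thompson's group with generators x₀, x₁, and let H, L be integers with H > 0, L ≠ 0, H + L > 0, and additionally H ≥ 2 whenever L < 0 (so that x₁⁻¹x₀ᴴx₁ᴸ contains a forbidden subword). Then the identity x₁⁻¹ x₀ᴴ x₁ᴸ = x₀ᴴ x₁ᴸ x₀^{-(H+L)} x₁⁻¹ x₀^{H+L} holds in F, and the right-hand side is the Guba–Sapir normal form of this element. -/
open scoped BigOperators
open scoped commutatorElement

/-- The two relators of the finite presentation of Thompson's group `F`: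
`[x₀x₁⁻¹, x₀⁻¹x₁x₀]` and `[x₀x₁⁻¹, x₀⁻²x₁x₀²]`. -/
def thompsonRels : Set (FreeGroup (Fin 2)) :=
  { ⁅FreeGroup.of (0 : Fin 2) * (FreeGroup.of (1 : Fin 2))⁻¹,
      (FreeGroup.of (0 : Fin 2))⁻¹ * FreeGroup.of (1 : Fin 2) * FreeGroup.of (0 : Fin 2)⁆,
    ⁅FreeGroup.of (0 : Fin 2) * (FreeGroup.of (1 : Fin 2))⁻¹,
      (FreeGroup.of (0 : Fin 2))⁻¹ ^ 2 * FreeGroup.of (1 : Fin 2) * FreeGroup.of (0 : Fin 2) ^ 2⁆ }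

/-- Thompson's group `F`, as a presented group. -/
abbrev ThompsonF : Type := PresentedGroup thompsonRels

/-- The generator `x₀`. -/
def x₀ : ThompsonF := PresentedGroup.of 0

/-- The generator `x₁`. -/
def x₁ : ThompsonF := PresentedGroup.of 1

/-- The canonical projection from the free group on `x₀, x₁` to Thompson's group. -/
def toF : List (Fin 2 × Bool) → ThompsonF := fun l =>
  PresentedGroup.mk thompsonRels (FreeGroup.mk l)

/-- The word representing `x_g^z` (`g = 0` or `1`), as a list of letters. -/
def powWord (g : Fin 2) (z : ℤ) : List (Fin 2 × Bool) :=
  List.replicate z.natAbs (g, decide (0 < z))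

/-- A word is reduced if it equals the reduced word of the free-group element
it represents. -/
def Reduced (l : List (Fin 2 × Bool)) : Prop :=
  (FreeGroup.mk l).toWord = l

/-- The forbidden subwords of Guba–Sapir: `x₁^{±1} x₀^i x₁` (`i > 0`) and
`x₁^{±1} x₀^{i+1} x₁⁻¹` (`i > 0`). -/
def ForbiddenWord (w : List (Fin 2 × Bool)) : Prop :=
  ∃ (s : Bool) (i : ℕ), 0 < i ∧
    (w = (1, s) :: (List.replicate i ((0 : Fin 2), true) ++ [((1 : Fin 2), true)]) ∨
     w = (1, s) :: (List.replicate (i + 1) ((0 : Fin 2), true) ++ [((1 : Fin 2), false)]))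

/-- A word is a (Guba–Sapir) normal form if it is reduced and contains no
forbidden subword. -/
def IsNormalForm (l : List (Fin 2 × Bool)) : Prop :=
  Reduced l ∧ ∀ w, w <:+: l → ¬ ForbiddenWord w

/-- `w` is the element of `F` whose normal form begins with the prefix `pre`. -/
def NFBeginsWith (w : ThompsonF) (pre : List (Fin 2 × Bool)) : Prop :=
  ∃ l, IsNormalForm l ∧ toF l = w ∧ pre <+: l

/-- `F₁ = {x₀^k : k ≥ 0}`. -/
def SetF₁ : Set ThompsonF := {w | ∃ k : ℕ, w = x₀ ^ k}

/-- `F₂`: normal form begins with `x₀^k x₁^l`, `k > 0`, `l ≠ 0`. -/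
def SetF₂ : Set ThompsonF :=
  {w | ∃ (k l : ℤ), 0 < k ∧ l ≠ 0 ∧ NFBeginsWith w (powWord 0 k ++ powWord 1 l)}

/-- `F₃`: normal form begins with `x₀^{-k} x₁^l`, `k > 0`, `l ∈ ℤ`. -/
def SetF₃ : Set ThompsonF :=
  {w | ∃ (k l : ℤ), 0 < k ∧ NFBeginsWith w (powWord 0 (-k) ++ powWord 1 l)}

/-- `F₄`: normal form begins with `x₁^k`, `k > 0`. -/
def SetF₄ : Set ThompsonF :=
  {w | ∃ k : ℤ, 0 < k ∧ NFBeginsWith w (powWord 1 k)}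

/-- `F₅`: normal form begins with `x₁^{-k}`, `k > 0`. -/
def SetF₅ : Set ThompsonF :=
  {w | ∃ k : ℤ, 0 < k ∧ NFBeginsWith w (powWord 1 (-k))}

def ff (h a m : ℕ) (s : Bool) (i : ℕ) : Fin 2 × Bool :=
  if i < h then (0,true) else if i < h+a then (1,s) else if i < h+a+m then (0,false)
  else if i = h+a+m then (1,false) else (0,true)

def bigL (h a m : ℕ) (s : Bool) : List (Fin 2 × Bool) :=
  List.replicate h ((0:Fin 2),true) ++ List.replicate a ((1:Fin 2),s) ++
      List.replicate m ((0:Fin 2),false) ++ [((1:Fin 2),false)] ++ List.replicate m ((0:Fin 2),true)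

lemma bigL_length (h a m : ℕ) (s : Bool) : (bigL h a m s).length = h + a + m + 1 + m := by
  simp [bigL]; omega

lemma bigL_get (h a m : ℕ) (s : Bool) (i : ℕ) (hi : i < h + a + m + 1 + m) :
    (bigL h a m s)[i]'(by rw [bigL_length]; omega) = ff h a m s i := by
  unfold bigL ff
  simp only [List.getElem_append, List.length_append, List.length_replicate, List.length_cons,
    List.length_nil, List.getElem_replicate, List.getElem_singleton]
  split_ifs <;> first | rfl | omega | (exfalso; omega)

lemma reduce_of_chain' {α : Type*} [DecidableEq α] :
    ∀ (l : List (α × Bool)), List.Chain' (fun x y => ¬(x.1 = y.1 ∧ x.2 = !y.2)) l →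
      FreeGroup.reduce l = l := by
  intro l hl
  induction l with
  | nil => rfl
  | cons x t ih =>
    rcases t with _ | ⟨y, t'⟩
    · rfl
    · rw [List.Chain', List.isChain_cons_cons] at hl
      have ht := ih hl.2
      rw [FreeGroup.reduce.cons, ht]
      simp only [if_neg hl.1]

lemma bigL_chain (h a m : ℕ) (ha : 1 ≤ a) (hm : 1 ≤ m) (s : Bool) :
    List.Chain' (fun x y => ¬(x.1 = y.1 ∧ x.2 = !y.2)) (bigL h a m s) := by
  rw [List.Chain', List.isChain_iff_getElem]
  intro i hi
  rw [bigL_length] at hi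
  rw [bigL_get h a m s i (by omega), bigL_get h a m s (i+1) (by omega)]
  unfold ff
  split_ifs <;> simp <;> omega

lemma bigL_reduced (h a m : ℕ) (ha : 1 ≤ a) (hm : 1 ≤ m) (s : Bool) :
    FreeGroup.reduce (bigL h a m s) = bigL h a m s :=
  reduce_of_chain' _ (bigL_chain h a m ha hm s)

lemma bigL_no_forbidden (h a m : ℕ) (ha : 1 ≤ a) (hm : 1 ≤ m) (s : Bool) :
    ∀ w, w <:+: bigL h a m s → ¬ ForbiddenWord w := by
  intro w hw hf
  obtain ⟨ss, i0, hi0, hcase⟩ := hf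
  obtain ⟨j, tt, hj, hwe⟩ : ∃ j tt, 1 ≤ j ∧
      w = ((1:Fin 2), ss) :: (List.replicate j ((0:Fin 2), true) ++ [((1:Fin 2), tt)]) := by
    rcases hcase with hc | hc
    · exact ⟨i0, true, hi0, hc⟩
    · exact ⟨i0 + 1, false, by omega, hc⟩
  obtain ⟨u, v, huv⟩ := hw
  set n := u.length with hn
  have hlw : w.length = j + 2 := by simp [hwe]
  have hlen : n + (j + 2) + v.length = h + a + m + 1 + m := by
    have := congrArg List.length huv
    rw [bigL_length] at this
    simp only [List.length_append, hlw] at this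
    omega
  have hl2 : bigL h a m s = u ++ (w ++ v) := by rw [← huv, List.append_assoc]
  have key : ∀ k, k < j + 2 → w[k]? = some (ff h a m s (n + k)) := by
    intro k hk
    have h1 : (bigL h a m s)[n + k]? = some (ff h a m s (n + k)) := by
      rw [List.getElem?_eq_getElem (by rw [bigL_length]; omega),
        bigL_get h a m s _ (by omega)]
    rw [hl2, List.getElem?_append_right (by omega : u.length ≤ n + k),
      show n + k - u.length = k by omega,
      List.getElem?_append_left (by omega : k < w.length)] at h1
    exact h1
  have f0 : ff h a m s n = ((1:Fin 2), ss) := by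
    have := (key 0 (by omega)).symm.trans (by rw [hwe]; simp : w[0]? = some ((1:Fin 2), ss))
    simpa using this
  have f1 : ff h a m s (n + 1) = ((0:Fin 2), true) := by
    have e1 : w[1]? = some ((0:Fin 2), true) := by
      rcases j with _ | j'
      · omega
      · rw [hwe]; simp [List.replicate_succ]
    have := (key 1 (by omega)).symm.trans e1
    simpa using this
  have f2 : ff h a m s (n + (j + 1)) = ((1:Fin 2), tt) := by
    have e2 : w[j+1]? = some ((1:Fin 2), tt) := by
      rw [hwe, List.getElem?_cons_succ,
        List.getElem?_append_right (by simp : (List.replicate j ((0:Fin 2),true)).length ≤ j)]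
      simp
    have := (key (j+1) (by omega)).symm.trans e2
    simpa using this
  have r0 : (h ≤ n ∧ n < h + a) ∨ n = h + a + m := by
    unfold ff at f0
    split_ifs at f0 with h1 h2 h3 h4
    · exact absurd (show (0:Fin 2) = 1 from congrArg Prod.fst f0) (by decide)
    · left; omega
    · exact absurd (show (0:Fin 2) = 1 from congrArg Prod.fst f0) (by decide)
    · right; omega
    · exact absurd (show (0:Fin 2) = 1 from congrArg Prod.fst f0) (by decide)
  have r1 : n + 1 < h ∨ n + 1 > h + a + m := by
    unfold ff at f1
    split_ifs at f1 with h1 h2 h3 h4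
    · left; omega
    · exact absurd (show (1:Fin 2) = 0 from congrArg Prod.fst f1) (by decide)
    · exact Bool.noConfusion (show false = true from congrArg Prod.snd f1)
    · exact absurd (show (1:Fin 2) = 0 from congrArg Prod.fst f1) (by decide)
    · right; omega
  have hnval : n = h + a + m := by omega
  unfold ff at f2
  split_ifs at f2 with h1 h2 h3 h4
  · omega
  · omega
  · omega
  · omega
  · exact absurd (show (0:Fin 2) = 1 from congrArg Prod.fst f2) (by decide)

/-- `a n = x₀^{-n} x₁ x₀^n`. -/
def aa (n : ℤ) : ThompsonF := x₀ ^ (-n) * x₁ * x₀ ^ n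

lemma mk_rel_one {r : FreeGroup (Fin 2)} (hr : r ∈ thompsonRels) :
    PresentedGroup.mk thompsonRels r = 1 := by
  have : r ∈ Subgroup.normalClosure thompsonRels := Subgroup.subset_normalClosure hr
  exact (QuotientGroup.eq_one_iff r).mpr this

lemma comm1 : (x₀ * x₁⁻¹) * (x₀⁻¹ * x₁ * x₀) = (x₀⁻¹ * x₁ * x₀) * (x₀ * x₁⁻¹) := by
  have h := mk_rel_one (Set.mem_insert _ _)
  rw [commutatorElement_def] at h
  have h2 : PresentedGroup.mk thompsonRels
      (⁅FreeGroup.of (0 : Fin 2) * (FreeGroup.of (1 : Fin 2))⁻¹,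
      (FreeGroup.of (0 : Fin 2))⁻¹ * FreeGroup.of (1 : Fin 2) * FreeGroup.of (0 : Fin 2)⁆) = 1 :=
    mk_rel_one (Set.mem_insert _ _)
  rw [commutatorElement_def] at h2
  simp only [map_mul, map_inv] at h2
  have h3 : ⁅x₀ * x₁⁻¹, x₀⁻¹ * x₁ * x₀⁆ = 1 := by
    rw [commutatorElement_def]
    exact h2
  exact commutatorElement_eq_one_iff_mul_comm.mp h3

lemma comm2 : (x₀ * x₁⁻¹) * (x₀⁻¹ ^ 2 * x₁ * x₀ ^ 2) = (x₀⁻¹ ^ 2 * x₁ * x₀ ^ 2) * (x₀ * x₁⁻¹) := by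
  have h2 : PresentedGroup.mk thompsonRels
      (⁅FreeGroup.of (0 : Fin 2) * (FreeGroup.of (1 : Fin 2))⁻¹,
      (FreeGroup.of (0 : Fin 2))⁻¹ ^ 2 * FreeGroup.of (1 : Fin 2) * FreeGroup.of (0 : Fin 2) ^ 2⁆) = 1 :=
    mk_rel_one (Set.mem_insert_of_mem _ rfl)
  simp only [commutatorElement_def, map_mul, map_inv, map_pow] at h2
  exact commutatorElement_eq_one_iff_mul_comm.mp
    (by rw [commutatorElement_def]; exact h2)

lemma aa_shift (n : ℤ) : x₀⁻¹ * aa n * x₀ = aa (n + 1) := by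
  unfold aa
  rw [show -(n+1) = -n - 1 by ring, show (n+1) = n + 1 from rfl]
  rw [zpow_sub, zpow_add]
  group

lemma C1 : x₁⁻¹ * aa 1 * x₁ = aa 2 := by
  have h := comm1
  have e1 : x₁⁻¹ * aa 1 * x₁ = x₀⁻¹ * ((x₀ * x₁⁻¹) * (x₀⁻¹ * x₁ * x₀)) * x₁ := by
    unfold aa; group
  rw [e1, h]
  unfold aa
  rw [show (2:ℤ) = 1+1 from rfl, zpow_add]
  group

lemma C2 : x₁⁻¹ * aa 2 * x₁ = aa 3 := by
  have h := comm2
  have e1 : x₁⁻¹ * aa 2 * x₁ = x₀⁻¹ * ((x₀ * x₁⁻¹) * (x₀⁻¹ ^ 2 * x₁ * x₀ ^ 2)) * x₁ := by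
    unfold aa; group
  rw [e1, h]
  unfold aa; group

lemma aa_one : aa 1 = x₀⁻¹ * x₁ * x₀ := by unfold aa; group

lemma D (k : ℤ) (hC : x₁⁻¹ * aa k * x₁ = aa (k+1)) :
    (aa 1)⁻¹ * aa (k+1) * aa 1 = aa (k+2) := by
  have hk : aa (k+1) = x₀⁻¹ * aa k * x₀ := (aa_shift k).symm
  have e : (aa 1)⁻¹ * aa (k+1) * aa 1 = x₀⁻¹ * (x₁⁻¹ * aa k * x₁) * x₀ := by
    rw [aa_one, hk]; group
  rw [e, hC]
  have := aa_shift (k+1)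
  rwa [show k+1+1 = k+2 by ring] at this

lemma D2 (k : ℤ) (hD : (aa 1)⁻¹ * aa (k+1) * aa 1 = aa (k+2)) :
    (aa 2)⁻¹ * aa (k+2) * aa 2 = aa (k+3) := by
  have ha2 : aa 2 = x₀⁻¹ * aa 1 * x₀ := by
    have := aa_shift 1; rwa [show (1:ℤ)+1 = 2 by ring] at this
  have hk : aa (k+2) = x₀⁻¹ * aa (k+1) * x₀ := by
    have := aa_shift (k+1); rw [show k+1+1 = k+2 by ring] at this; exact this.symm
  have e : (aa 2)⁻¹ * aa (k+2) * aa 2 = x₀⁻¹ * ((aa 1)⁻¹ * aa (k+1) * aa 1) * x₀ := by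
    rw [ha2, hk]; group
  rw [e, hD]
  have := aa_shift (k+2)
  rwa [show k+2+1 = k+3 by ring] at this

lemma Cn : ∀ n : ℕ, x₁⁻¹ * aa ((n:ℤ)+1) * x₁ = aa ((n:ℤ)+2) := by
  intro n
  induction n using Nat.strong_induction_on with
  | _ n ih =>
    match n with
    | 0 => exact_mod_cast C1
    | 1 => exact_mod_cast C2
    | (k+2) =>
      have ck : x₁⁻¹ * aa ((k:ℤ)+1) * x₁ = aa ((k:ℤ)+2) := ih k (by omega)
      have ck1 : x₁⁻¹ * aa ((k:ℤ)+2) * x₁ = aa ((k:ℤ)+3) := by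
        have := ih (k+1) (by omega); push_cast at this ⊢
        rw [show (k:ℤ)+1+1 = (k:ℤ)+2 by ring, show (k:ℤ)+1+2 = (k:ℤ)+3 by ring] at this
        exact this
      have dk : (aa 1)⁻¹ * aa ((k:ℤ)+2) * aa 1 = aa ((k:ℤ)+3) := by
        have := D ((k:ℤ)+1) ck
        rwa [show (k:ℤ)+1+1 = (k:ℤ)+2 by ring, show (k:ℤ)+1+2 = (k:ℤ)+3 by ring] at this
      have d2k : (aa 2)⁻¹ * aa ((k:ℤ)+3) * aa 2 = aa ((k:ℤ)+4) := by
        have := D2 ((k:ℤ)+1) (by rwa [show (k:ℤ)+1+1 = (k:ℤ)+2 by ring, show (k:ℤ)+1+2 = (k:ℤ)+3 by ring])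
        rwa [show (k:ℤ)+1+2 = (k:ℤ)+3 by ring, show (k:ℤ)+1+3 = (k:ℤ)+4 by ring] at this
      have c0 := C1
      push_cast
      rw [show ((k:ℤ)+2)+1 = (k:ℤ)+3 by ring, show ((k:ℤ)+2)+2 = (k:ℤ)+4 by ring]
      calc x₁⁻¹ * aa ((k:ℤ)+3) * x₁
          = x₁⁻¹ * ((aa 1)⁻¹ * aa ((k:ℤ)+2) * aa 1) * x₁ := by rw [dk]
        _ = (x₁⁻¹ * aa 1 * x₁)⁻¹ * (x₁⁻¹ * aa ((k:ℤ)+2) * x₁) * (x₁⁻¹ * aa 1 * x₁) := by group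
        _ = (aa 2)⁻¹ * aa ((k:ℤ)+3) * aa 2 := by rw [c0, ck1]
        _ = aa ((k:ℤ)+4) := d2k

lemma Cz (n : ℤ) (hn : 1 ≤ n) : x₁⁻¹ * aa n * x₁ = aa (n+1) := by
  obtain ⟨m, rfl⟩ : ∃ m : ℕ, n = (m:ℤ)+1 := ⟨(n-1).toNat, by omega⟩
  have := Cn m
  rwa [show (m:ℤ)+2 = (m:ℤ)+1+1 by ring] at this

lemma Epos (j : ℕ) : ∀ n : ℤ, 1 ≤ n →
    x₁ ^ (-(j:ℤ)) * aa n * x₁ ^ (j:ℤ) = aa (n + j) := by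
  induction j with
  | zero => intro n hn; simp
  | succ j ih =>
    intro n hn
    have e : x₁ ^ (-((j:ℤ)+1)) * aa n * x₁ ^ ((j:ℤ)+1)
        = x₁ ^ (-(j:ℤ)) * (x₁⁻¹ * aa n * x₁) * x₁ ^ (j:ℤ) := by
      rw [show -((j:ℤ)+1) = -(j:ℤ) + (-1) by ring, zpow_add, zpow_add]
      group
    push_cast
    rw [e, Cz n hn, ih (n+1) (by omega)]
    ring_nf

lemma Efull (n k : ℤ) (hn : 1 ≤ n) (hnk : 1 ≤ n + k) :
    x₁ ^ (-k) * aa n * x₁ ^ k = aa (n + k) := by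
  rcases le_or_gt 0 k with hk | hk
  · obtain ⟨j, rfl⟩ := Int.eq_ofNat_of_zero_le hk
    exact Epos j n hn
  · obtain ⟨j, hj⟩ : ∃ j : ℕ, (j:ℤ) = -k := ⟨(-k).toNat, by omega⟩
    have h2 := Epos j (n + k) hnk
    rw [hj, show n + k + -k = n by ring, show - -k = k by ring] at h2
    rw [← h2]
    group

lemma part1 (H L : ℤ) (hH : 0 < H) (hHL : 0 < H + L) :
    x₁⁻¹ * x₀ ^ H * x₁ ^ L = x₀ ^ H * x₁ ^ L * x₀ ^ (-(H + L)) * x₁⁻¹ * x₀ ^ (H + L) := by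
  have key := Efull H L hH hHL
  unfold aa at key
  have e : x₁⁻¹ * x₀ ^ H * x₁ ^ L
      = x₀ ^ H * x₁ ^ L * (x₁ ^ (-L) * (x₀ ^ (-H) * x₁ * x₀ ^ H) * x₁ ^ L)⁻¹ := by group
  rw [e, key]
  group

lemma mk_replicate_true (g : Fin 2) (n : ℕ) :
    FreeGroup.mk (List.replicate n (g, true)) = FreeGroup.of g ^ n := by
  induction n with
  | zero => rfl
  | succ n ih =>
    rw [List.replicate_succ, show (g, true) :: List.replicate n (g, true)
      = [(g,true)] ++ List.replicate n (g,true) from rfl, ← FreeGroup.mul_mk, ih, pow_succ]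
    rw [show FreeGroup.mk [(g,true)] = FreeGroup.of g from rfl]
    exact (pow_succ' _ _).symm.trans (pow_succ _ _)

lemma mk_replicate_false (g : Fin 2) (n : ℕ) :
    FreeGroup.mk (List.replicate n (g, false)) = (FreeGroup.of g)⁻¹ ^ n := by
  induction n with
  | zero => rfl
  | succ n ih =>
    rw [List.replicate_succ, show (g, false) :: List.replicate n (g, false)
      = [(g,false)] ++ List.replicate n (g,false) from rfl, ← FreeGroup.mul_mk, ih, pow_succ]
    have : FreeGroup.mk [(g,false)] = (FreeGroup.of g)⁻¹ := by
      rw [show FreeGroup.of g = FreeGroup.mk [(g,true)] from rfl, FreeGroup.inv_mk]; rfl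
    rw [this]
    exact (pow_succ' _ _).symm.trans (pow_succ _ _)

lemma mk_powWord (g : Fin 2) (z : ℤ) :
    FreeGroup.mk (powWord g z) = FreeGroup.of g ^ z := by
  unfold powWord
  rcases lt_trichotomy z 0 with hz | rfl | hz
  · rw [show decide (0 < z) = false by simp [not_lt.mpr hz.le], mk_replicate_false,
      inv_pow, ← zpow_natCast, ← zpow_neg]
    congr 1; omega
  · rfl
  · rw [show decide (0 < z) = true by simp [hz], mk_replicate_true, ← zpow_natCast]
    congr 1; omega

lemma toF_append (l₁ l₂ : List (Fin 2 × Bool)) : toF (l₁ ++ l₂) = toF l₁ * toF l₂ := by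
  unfold toF
  rw [← FreeGroup.mul_mk, map_mul]

lemma toF_powWord (g : Fin 2) (z : ℤ) :
    toF (powWord g z) = (PresentedGroup.of g : ThompsonF) ^ z := by
  unfold toF
  rw [mk_powWord, map_zpow]
  rfl

lemma part3 (H L : ℤ) :
    toF (powWord 0 H ++ powWord 1 L ++ powWord 0 (-(H + L)) ++ powWord 1 (-1) ++
        powWord 0 (H + L)) =
      x₀ ^ H * x₁ ^ L * x₀ ^ (-(H + L)) * x₁⁻¹ * x₀ ^ (H + L) := by
  rw [toF_append, toF_append, toF_append, toF_append]
  rw [toF_powWord, toF_powWord, toF_powWord, toF_powWord, toF_powWord]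
  rw [show ((-1:ℤ)) = -1 from rfl]
  norm_num [x₀, x₁]

/-- formula (5). If `H > 0`, `L ≠ 0`, `H + L > 0` (and `H ≥ 2` if `L < 0`),
then `x₁⁻¹x₀ᴴx₁ᴸ = x₀ᴴx₁ᴸx₀^{-(H+L)}x₁⁻¹x₀^{H+L}` in `F`, and the right-hand side is
the Guba–Sapir normal form of this element. -/
theorem statement8 (H L : ℤ) (hH : 0 < H) (hL : L ≠ 0) (hHL : 0 < H + L)
    (hneg : L < 0 → 2 ≤ H) :
    x₁⁻¹ * x₀ ^ H * x₁ ^ L =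
      x₀ ^ H * x₁ ^ L * x₀ ^ (-(H + L)) * x₁⁻¹ * x₀ ^ (H + L) ∧
    IsNormalForm
      (powWord 0 H ++ powWord 1 L ++ powWord 0 (-(H + L)) ++ powWord 1 (-1) ++
        powWord 0 (H + L)) ∧
    toF (powWord 0 H ++ powWord 1 L ++ powWord 0 (-(H + L)) ++ powWord 1 (-1) ++
        powWord 0 (H + L)) =
      x₁⁻¹ * x₀ ^ H * x₁ ^ L := by
  
  have hLa : 1 ≤ L.natAbs := by omega
  have hm : 1 ≤ (H + L).toNat := by omega
  have e0 : powWord 0 H = List.replicate H.toNat ((0:Fin 2), true) := by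
    unfold powWord
    rw [show decide (0 < H) = true by simp [hH], show H.natAbs = H.toNat by omega]
  have e2 : powWord 0 (-(H+L)) = List.replicate (H+L).toNat ((0:Fin 2), false) := by
    unfold powWord
    rw [show decide (0 < -(H+L)) = false by simp; omega,
      show (-(H+L)).natAbs = (H+L).toNat by omega]
  have e3 : powWord 1 (-1) = [((1:Fin 2), false)] := by
    unfold powWord; rfl
  have e4 : powWord 0 (H+L) = List.replicate (H+L).toNat ((0:Fin 2), true) := by
    unfold powWord
    rw [show decide (0 < (H+L)) = true by simp [hHL], show (H+L).natAbs = (H+L).toNat by omega]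
  have e1 : powWord 1 L = List.replicate L.natAbs ((1:Fin 2), decide (0 < L)) := rfl
  have ebig : powWord 0 H ++ powWord 1 L ++ powWord 0 (-(H + L)) ++ powWord 1 (-1) ++
      powWord 0 (H + L) = bigL H.toNat L.natAbs (H+L).toNat (decide (0 < L)) := by
    rw [e0, e1, e2, e3, e4]; rfl
  refine ⟨part1 H L hH hHL, ?_, (part3 H L).trans (part1 H L hH hHL).symm⟩
  rw [ebig]
  constructor
  · unfold Reduced
    rw [FreeGroup.toWord_mk]
    exact bigL_reduced _ _ _ hLa hm _
  · exact bigL_no_forbidden _ _ _ hLa hm _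
end

section
/- Let F be Thompson's group with generators x₀, x₁, and let H, L be integers with H ≥ 2, L ≠ 0, and H + L ≤ 0 (so that x₁x₀ᴴx₁ᴸ contains a forbidden subword). Then the identity x₁ x₀ᴴ x₁ᴸ = x₀ᴴ x₁^{-H+1} x₀⁻¹ x₁ x₀ x₁^{H+L-1} holds in F, and the right-hand side is the Guba–Sapir normal form of this element. -/
open scoped BigOperators
open scoped commutatorElement

namespace S11Aux

/-! ### Generic list/free-group auxiliary lemmas -/

lemma chain'_replicate_self {β : Type*} {R : β → β → Prop} {a : β} (h : R a a) :
    ∀ k, List.Chain' R (List.replicate k a)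
  | 0 => List.isChain_nil
  | 1 => by rw [List.replicate_one]; exact List.isChain_singleton a
  | (k+2) => by
      rw [List.replicate_succ]
      rw [show List.replicate (k+1) a = a :: List.replicate k a from List.replicate_succ ..]
      exact List.isChain_cons_cons.mpr ⟨h, by
        rw [← List.replicate_succ]; exact chain'_replicate_self h (k+1)⟩

lemma chain'_replicate_append {β : Type*} {R : β → β → Prop} {a : β} {l : List β}
    (h : R a a) (hl : List.Chain' R (a :: l)) :
    ∀ k, List.Chain' R (List.replicate k a ++ l)
  | 0 => hl.tail
  | (k+1) => by
      have ih := chain'_replicate_append h hl k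
      rw [List.replicate_succ, List.cons_append]
      refine List.isChain_cons.mpr ⟨?_, ih⟩
      intro y hy
      rcases k with _ | k
      · simp only [List.replicate_zero, List.nil_append] at hy
        exact (List.isChain_cons.mp hl).1 y hy
      · rw [List.replicate_succ, List.cons_append, List.head?_cons] at hy
        simp only [Option.mem_some_iff] at hy
        exact hy ▸ h

lemma reduce_eq_self_of_chain' {α : Type*} [DecidableEq α] : ∀ {l : List (α × Bool)},
    l.Chain' (fun a b => ¬(a.1 = b.1 ∧ a.2 = !b.2)) → FreeGroup.reduce l = l
  | [], _ => rfl
  | [_], _ => rfl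
  | x :: y :: l, h => by
      obtain ⟨h1, h2⟩ := List.isChain_cons_cons.mp h
      have ih := reduce_eq_self_of_chain' h2
      rw [FreeGroup.reduce.cons, ih]
      exact if_neg h1

/-! ### The relations of Thompson's group -/

lemma mk_rel_one {r : FreeGroup (Fin 2)} (hr : r ∈ thompsonRels) :
    PresentedGroup.mk thompsonRels r = 1 :=
  (QuotientGroup.eq_one_iff r).mpr (Subgroup.subset_normalClosure hr)

lemma comm1 : (x₀ * x₁⁻¹) * (x₀⁻¹ * x₁ * x₀) = (x₀⁻¹ * x₁ * x₀) * (x₀ * x₁⁻¹) := by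
  have h := mk_rel_one (Set.mem_insert _ _)
  rw [map_commutatorElement, commutatorElement_eq_one_iff_mul_comm] at h
  simp only [map_mul, map_inv] at h; exact h

lemma comm2 : (x₀ * x₁⁻¹) * (x₀⁻¹^2 * x₁ * x₀^2) = (x₀⁻¹^2 * x₁ * x₀^2) * (x₀ * x₁⁻¹) := by
  have h := mk_rel_one (Set.mem_insert_of_mem _ rfl)
  rw [map_commutatorElement, commutatorElement_eq_one_iff_mul_comm] at h
  simp only [map_mul, map_inv, map_pow] at h; exact h

/-- `b n = x₀⁻ⁿ x₁ x₀ⁿ`, i.e. the generator `x_{n+1}` of Thompson's group. -/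
noncomputable def b (n : ℕ) : ThompsonF := x₀ ^ (-(n:ℤ)) * x₁ * x₀ ^ (n:ℤ)

lemma b_succ (n : ℕ) : b (n+1) = x₀⁻¹ * b n * x₀ := by
  unfold b; push_cast; group

lemma b_one : b 1 = x₀⁻¹ * x₁ * x₀ := by unfold b; group

lemma b_shift (j t : ℕ) : b (j + t) = x₀ ^ (-(t:ℤ)) * b j * x₀ ^ (t:ℤ) := by
  unfold b; push_cast; group

/-- Conjugating the commutation relation at level `j` by `x₀^t`. -/
lemma D (j t : ℕ) (hC : x₁⁻¹ * b j * x₁ = x₀⁻¹ * b j * x₀) :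
    (b t)⁻¹ * b (j + t) * b t = b (j + t + 1) := by
  have h1 : b (j + t) = x₀ ^ (-(t:ℤ)) * b j * x₀ ^ (t:ℤ) := b_shift j t
  have h2 : b (j + 1 + t) = x₀ ^ (-(t:ℤ)) * b (j+1) * x₀ ^ (t:ℤ) := b_shift (j+1) t
  have h3 : b (j + 1) = x₀⁻¹ * b j * x₀ := b_succ j
  have h4 : (b t)⁻¹ * b (j + t) * b t
      = x₀ ^ (-(t:ℤ)) * (x₁⁻¹ * b j * x₁) * x₀ ^ (t:ℤ) := by
    rw [h1]; unfold b; group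
  rw [h4, hC, show j + t + 1 = j + 1 + t by omega, h2, h3]

/-- The commutation relations `[x₀x₁⁻¹, b (n+1)] = 1` (in conjugation form) for all `n`,
derived from the two defining relations by induction. -/
lemma C : ∀ n : ℕ, x₁⁻¹ * b (n+1) * x₁ = x₀⁻¹ * b (n+1) * x₀ := by
  intro n
  induction n using Nat.strong_induction_on with
  | _ n ih =>
    match n with
    | 0 =>
      have h := comm1
      rw [← b_one] at h
      calc x₁⁻¹ * b 1 * x₁ = x₀⁻¹ * ((x₀ * x₁⁻¹) * b 1) * x₁ := by group
        _ = x₀⁻¹ * (b 1 * (x₀ * x₁⁻¹)) * x₁ := by rw [h]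
        _ = x₀⁻¹ * b 1 * x₀ := by group
    | 1 =>
      have h := comm2
      have hb2 : b 2 = x₀⁻¹^2 * x₁ * x₀^2 := by unfold b; group
      rw [← hb2] at h
      calc x₁⁻¹ * b 2 * x₁ = x₀⁻¹ * ((x₀ * x₁⁻¹) * b 2) * x₁ := by group
        _ = x₀⁻¹ * (b 2 * (x₀ * x₁⁻¹)) * x₁ := by rw [h]
        _ = x₀⁻¹ * b 2 * x₀ := by group
    | (k+2) =>
      have hk : x₁⁻¹ * b (k+1) * x₁ = x₀⁻¹ * b (k+1) * x₀ := ih k (by omega)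
      have hk1 : x₁⁻¹ * b (k+2) * x₁ = x₀⁻¹ * b (k+2) * x₀ := ih (k+1) (by omega)
      have e1 : (b 1)⁻¹ * b (k+2) * b 1 = b (k+3) := by
        have := D (k+1) 1 hk; simpa [show k+1+1 = k+2 by omega] using this
      have h1 : x₁⁻¹ * b 1 * x₁ = x₀⁻¹ * b 1 * x₀ := ih 0 (by omega)
      have e2 : b 1 * x₁ = x₁ * b 2 := by
        have hb : x₁⁻¹ * b 1 * x₁ = b 2 := by rw [h1, ← b_succ]
        calc b 1 * x₁ = x₁ * (x₁⁻¹ * b 1 * x₁) := by group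
          _ = x₁ * b 2 := by rw [hb]
      have e3 : x₁⁻¹ * b (k+2) * x₁ = b (k+3) := by rw [hk1, ← b_succ]
      have e4 : (b 2)⁻¹ * b (k+3) * b 2 = b (k+4) := by
        have := D (k+1) 2 hk; simpa [show k+1+2 = k+3 by omega] using this
      calc x₁⁻¹ * b (k+3) * x₁ = x₁⁻¹ * ((b 1)⁻¹ * b (k+2) * b 1) * x₁ := by rw [e1]
        _ = (b 1 * x₁)⁻¹ * b (k+2) * (b 1 * x₁) := by group
        _ = (x₁ * b 2)⁻¹ * b (k+2) * (x₁ * b 2) := by rw [e2]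
        _ = (b 2)⁻¹ * (x₁⁻¹ * b (k+2) * x₁) * b 2 := by group
        _ = (b 2)⁻¹ * b (k+3) * b 2 := by rw [e3]
        _ = b (k+4) := e4
        _ = x₀⁻¹ * b (k+3) * x₀ := b_succ (k+3)

/-- `b (n+1) = x₁^{-n} (x₀⁻¹x₁x₀) x₁^{n}`. -/
lemma P : ∀ n : ℕ, b (n+1) = x₁ ^ (-(n:ℤ)) * b 1 * x₁ ^ (n:ℤ)
  | 0 => by group
  | (n+1) => by
    have hb : b (n+2) = x₁⁻¹ * b (n+1) * x₁ := by rw [C n, ← b_succ]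
    rw [hb, P n]; push_cast; group

/-- The main identity of Statement 11. -/
lemma identity (H L : ℤ) (hH : 2 ≤ H) :
    x₁ * x₀ ^ H * x₁ ^ L = x₀ ^ H * x₁ ^ (-H + 1) * x₀⁻¹ * x₁ * x₀ * x₁ ^ (H + L - 1) := by
  set n : ℕ := (H - 2).toNat with hn_def
  have hn : (n : ℤ) = H - 2 := Int.toNat_of_nonneg (by omega)
  have h := P (n + 1)
  rw [b_one] at h
  unfold b at h
  push_cast at h
  have key : x₀ ^ (-H) * x₁ * x₀ ^ H = x₁ ^ (-H + 1) * (x₀⁻¹ * x₁ * x₀) * x₁ ^ (H - 1) := by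
    rw [show (-H : ℤ) = -((n:ℤ) + 1 + 1) by omega, show (H : ℤ) = (n:ℤ) + 1 + 1 by omega]
    rw [show (-((n:ℤ)+1+1) + 1 : ℤ) = -((n:ℤ) + 1) by ring,
        show ((n:ℤ)+1+1 - 1 : ℤ) = (n:ℤ) + 1 by ring]
    exact h
  calc x₁ * x₀ ^ H * x₁ ^ L = x₀ ^ H * (x₀ ^ (-H) * x₁ * x₀ ^ H) * x₁ ^ L := by group
    _ = x₀ ^ H * (x₁ ^ (-H + 1) * (x₀⁻¹ * x₁ * x₀) * x₁ ^ (H - 1)) * x₁ ^ L := by rw [key]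
    _ = x₀ ^ H * x₁ ^ (-H + 1) * x₀⁻¹ * x₁ * x₀ * x₁ ^ (H + L - 1) := by group

/-! ### The normal-form word -/

/-- Right-associated explicit form of the normal-form word. -/
def U (n m : ℕ) : List (Fin 2 × Bool) :=
  List.replicate (n+2) ((0:Fin 2), true) ++
    (List.replicate (n+1) ((1:Fin 2), false) ++
      (((0:Fin 2), false) :: ((1:Fin 2), true) :: ((0:Fin 2), true) ::
        List.replicate (m+1) ((1:Fin 2), false)))

lemma getU (n m i : ℕ) :
    (U n m)[i]? =
      if i < n+2 then some ((0:Fin 2), true)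
      else if i < 2*n+3 then some ((1:Fin 2), false)
      else if i = 2*n+3 then some ((0:Fin 2), false)
      else if i = 2*n+4 then some ((1:Fin 2), true)
      else if i = 2*n+5 then some ((0:Fin 2), true)
      else if i < 2*n+7+m then some ((1:Fin 2), false)
      else none := by
  unfold U
  simp only [List.getElem?_append, List.getElem?_replicate, List.getElem?_cons,
    List.length_replicate]
  split_ifs <;> first | rfl | omega

lemma no_pattern (n m : ℕ) (x z : Fin 2 × Bool) (hx : x.1 = 1)
    (hz : z = ((1:Fin 2), true) ∨ z = ((0:Fin 2), true)) :
    ¬ ([x, ((0:Fin 2), true), z] <:+: U n m) := by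
  rintro ⟨s, t, hst⟩
  have h0 : (U n m)[s.length]? = some x := by
    rw [← hst, List.append_assoc, List.getElem?_append_right le_rfl]
    simp
  have h1 : (U n m)[s.length + 1]? = some ((0:Fin 2), true) := by
    rw [← hst, List.append_assoc, List.getElem?_append_right (by omega)]
    simp [show s.length + 1 - s.length = 1 by omega]
  have h2 : (U n m)[s.length + 2]? = some z := by
    rw [← hst, List.append_assoc, List.getElem?_append_right (by omega)]
    simp [show s.length + 2 - s.length = 2 by omega]
  rw [getU] at h0 h1 h2
  set k := s.length with hk
  split_ifs at h1 with d1 d2 d3 d4 d5 d6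
  · rw [if_pos (show k < n+2 by omega)] at h0
    injection h0 with h0
    rw [← h0] at hx
    exact absurd hx (by decide)
  · exact absurd h1 (by decide)
  · exact absurd h1 (by decide)
  · exact absurd h1 (by decide)
  · rw [if_neg (by omega), if_neg (by omega), if_neg (by omega), if_neg (by omega),
        if_neg (by omega), if_pos (by omega)] at h2
    injection h2 with h2
    rcases hz with rfl | rfl <;> exact absurd h2 (by decide)
  · exact absurd h1 (by decide)

lemma chainU (n m : ℕ) :
    List.Chain' (fun a b : Fin 2 × Bool => ¬(a.1 = b.1 ∧ a.2 = !b.2)) (U n m) := by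
  unfold U
  apply chain'_replicate_append (by decide)
  rw [List.replicate_succ, List.cons_append]
  refine List.isChain_cons_cons.mpr ⟨by decide, ?_⟩
  rw [← List.cons_append, ← List.replicate_succ]
  apply chain'_replicate_append (by decide)
  refine List.isChain_cons_cons.mpr ⟨by decide, ?_⟩
  refine List.isChain_cons_cons.mpr ⟨by decide, ?_⟩
  refine List.isChain_cons_cons.mpr ⟨by decide, ?_⟩
  rw [List.replicate_succ]
  refine List.isChain_cons_cons.mpr ⟨by decide, ?_⟩
  rw [← List.replicate_succ]
  exact chain'_replicate_self (by decide) _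

lemma forbidden_pattern {w : List (Fin 2 × Bool)} (hf : ForbiddenWord w) :
    ∃ x z : Fin 2 × Bool, x.1 = 1 ∧ (z = ((1:Fin 2), true) ∨ z = ((0:Fin 2), true)) ∧
      [x, ((0:Fin 2), true), z] <:+: w := by
  obtain ⟨s, i, hi, hw | hw⟩ := hf
  · rcases i with _ | _ | i
    · omega
    · exact ⟨(1, s), ((1:Fin 2), true), rfl, Or.inl rfl, by rw [hw]; simp⟩
    · refine ⟨(1, s), ((0:Fin 2), true), rfl, Or.inr rfl,
        ⟨[], List.replicate i ((0:Fin 2), true) ++ [((1:Fin 2), true)], ?_⟩⟩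
      rw [hw]
      simp [List.replicate_succ]
  · rcases i with _ | i
    · omega
    · refine ⟨(1, s), ((0:Fin 2), true), rfl, Or.inr rfl,
        ⟨[], List.replicate i ((0:Fin 2), true) ++ [((1:Fin 2), false)], ?_⟩⟩
      rw [hw]
      simp [List.replicate_succ]

lemma normalU (n m : ℕ) : IsNormalForm (U n m) := by
  constructor
  · show (FreeGroup.mk (U n m)).toWord = U n m
    rw [FreeGroup.toWord_mk]
    exact reduce_eq_self_of_chain' (chainU n m)
  · intro w hw hf
    obtain ⟨x, z, hx, hz, hpat⟩ := forbidden_pattern hf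
    exact no_pattern n m x z hx hz (hpat.trans hw)

/-! ### Evaluation of `toF` on words -/

lemma toF_append (l₁ l₂ : List (Fin 2 × Bool)) : toF (l₁ ++ l₂) = toF l₁ * toF l₂ := by
  unfold toF; rw [← FreeGroup.mul_mk, map_mul]

lemma toF_single_true (g : Fin 2) : toF [(g, true)] = PresentedGroup.of g := rfl

lemma toF_single_false (g : Fin 2) : toF [(g, false)] = (PresentedGroup.of g)⁻¹ := by
  have h : ((FreeGroup.of g)⁻¹ : FreeGroup (Fin 2)) = FreeGroup.mk [(g, false)] := by
    rw [show (FreeGroup.of g : FreeGroup (Fin 2)) = FreeGroup.mk [(g, true)] from rfl,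
      FreeGroup.inv_mk]
    congr 1
  unfold toF
  rw [← h, map_inv]
  rfl

lemma toF_replicate_true (g : Fin 2) :
    ∀ k, toF (List.replicate k (g, true)) = PresentedGroup.of g ^ k
  | 0 => by
      rw [List.replicate_zero, pow_zero]
      show PresentedGroup.mk thompsonRels (FreeGroup.mk []) = 1
      rw [← FreeGroup.one_eq_mk, map_one]
  | (k+1) => by
      rw [List.replicate_succ,
        show ((g, true) :: List.replicate k (g, true))
          = [(g, true)] ++ List.replicate k (g, true) from rfl,
        toF_append, toF_single_true, toF_replicate_true g k, pow_succ']

lemma toF_replicate_false (g : Fin 2) :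
    ∀ k, toF (List.replicate k (g, false)) = (PresentedGroup.of g)⁻¹ ^ k
  | 0 => by
      rw [List.replicate_zero, pow_zero]
      show PresentedGroup.mk thompsonRels (FreeGroup.mk []) = 1
      rw [← FreeGroup.one_eq_mk, map_one]
  | (k+1) => by
      rw [List.replicate_succ,
        show ((g, false) :: List.replicate k (g, false))
          = [(g, false)] ++ List.replicate k (g, false) from rfl,
        toF_append, toF_single_false, toF_replicate_false g k, pow_succ']

lemma toF_powWord (g : Fin 2) (z : ℤ) : toF (powWord g z) = PresentedGroup.of g ^ z := by
  unfold powWord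
  rcases lt_trichotomy 0 z with h | h | h
  · rw [decide_eq_true h, toF_replicate_true, ← zpow_natCast,
      Int.natAbs_of_nonneg h.le]
  · rw [← h]
    simp only [Int.natAbs_zero, List.replicate_zero, zpow_zero]
    show PresentedGroup.mk thompsonRels (FreeGroup.mk []) = 1
    rw [← FreeGroup.one_eq_mk, map_one]
  · have hz : (z.natAbs : ℤ) = -z := by omega
    rw [decide_eq_false (by omega : ¬ (0 < z)), toF_replicate_false, inv_pow,
      ← zpow_natCast, hz, ← zpow_neg, neg_neg]

end S11Aux

/-- formula (8). If `H ≥ 2`, `L ≠ 0`, `H + L ≤ 0`, then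
`x₁x₀ᴴx₁ᴸ = x₀ᴴx₁^{-H+1}x₀⁻¹x₁x₀x₁^{H+L-1}` in `F`, and the right-hand side is
the Guba–Sapir normal form of this element. -/
theorem statement11 (H L : ℤ) (hH : 2 ≤ H) (hL : L ≠ 0) (hHL : H + L ≤ 0) :
    x₁ * x₀ ^ H * x₁ ^ L =
      x₀ ^ H * x₁ ^ (-H + 1) * x₀⁻¹ * x₁ * x₀ * x₁ ^ (H + L - 1) ∧
    IsNormalForm
      (powWord 0 H ++ powWord 1 (-H + 1) ++ powWord 0 (-1) ++ powWord 1 1 ++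
        powWord 0 1 ++ powWord 1 (H + L - 1)) ∧
    toF (powWord 0 H ++ powWord 1 (-H + 1) ++ powWord 0 (-1) ++ powWord 1 1 ++
        powWord 0 1 ++ powWord 1 (H + L - 1)) =
      x₁ * x₀ ^ H * x₁ ^ L  := by
  have hx0 : (PresentedGroup.of (0 : Fin 2) : ThompsonF) = x₀ := rfl
  have hx1 : (PresentedGroup.of (1 : Fin 2) : ThompsonF) = x₁ := rfl
  set n : ℕ := (H - 2).toNat with hn_def
  set m : ℕ := (-(H + L)).toNat with hm_def
  have e1 : powWord 0 H = List.replicate (n+2) ((0:Fin 2), true) := by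
    unfold powWord
    rw [show H.natAbs = n+2 by omega, decide_eq_true (show (0:ℤ) < H by omega)]
  have e2 : powWord 1 (-H+1) = List.replicate (n+1) ((1:Fin 2), false) := by
    unfold powWord
    rw [show (-H+1).natAbs = n+1 by omega, decide_eq_false (show ¬ ((0:ℤ) < -H+1) by omega)]
  have e3 : powWord 0 (-1 : ℤ) = [((0:Fin 2), false)] := rfl
  have e4 : powWord 1 (1 : ℤ) = [((1:Fin 2), true)] := rfl
  have e5 : powWord 0 (1 : ℤ) = [((0:Fin 2), true)] := rfl
  have e6 : powWord 1 (H+L-1) = List.replicate (m+1) ((1:Fin 2), false) := by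
    unfold powWord
    rw [show (H+L-1).natAbs = m+1 by omega,
      decide_eq_false (show ¬ ((0:ℤ) < H+L-1) by omega)]
  have hW : powWord 0 H ++ powWord 1 (-H + 1) ++ powWord 0 (-1) ++ powWord 1 1 ++
      powWord 0 1 ++ powWord 1 (H + L - 1) = S11Aux.U n m := by
    rw [e1, e2, e3, e4, e5, e6]
    unfold S11Aux.U
    simp only [List.append_assoc, List.singleton_append, List.cons_append, List.nil_append]
  refine ⟨S11Aux.identity H L hH, ?_, ?_⟩
  · rw [hW]
    exact S11Aux.normalU n m
  · rw [hW, ← hW, S11Aux.toF_append, S11Aux.toF_append, S11Aux.toF_append,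
      S11Aux.toF_append, S11Aux.toF_append]
    rw [S11Aux.toF_powWord, S11Aux.toF_powWord, S11Aux.toF_powWord, S11Aux.toF_powWord,
      S11Aux.toF_powWord, S11Aux.toF_powWord, hx0, hx1]
    rw [zpow_one, zpow_one, show ((-1 : ℤ)) = -(1:ℤ) from rfl, zpow_neg, zpow_one]
    exact (S11Aux.identity H L hH).symm
end

section
/- Let F be Thompson's group with generators x₀, x₁. The map ℤ × ℤ → F given by (a, b) ↦ x₀^a x₁ x₀^b is injective; in particular, if x₀ⁱ x₁ x₀^h = x₀ʲ x₁ x₀^{h'} in F for integers i, j, h, h', then i = j and h = h'. -/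
open scoped BigOperators
open scoped commutatorElement

/-! ### Auxiliary: a representation of `F` by piecewise-linear permutations of `ℝ` -/

noncomputable def Cfun (t : ℝ) : ℝ := if t ≤ 0 then t else if t ≤ 2 then t / 2 else t - 1

noncomputable def Cinv (t : ℝ) : ℝ := if t ≤ 0 then t else if t ≤ 1 then 2 * t else t + 1

noncomputable def permA : Equiv.Perm ℝ :=
  ⟨fun t => t - 1, fun t => t + 1, fun t => by ring, fun t => by ring⟩

noncomputable def permB : Equiv.Perm ℝ := by
  refine ⟨Cfun, Cinv, fun t => ?_, fun t => ?_⟩ <;>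
    · unfold Cfun Cinv
      split_ifs <;> linarith

lemma permA_apply (t : ℝ) : permA t = t - 1 := rfl
lemma permA_inv_apply (t : ℝ) : permA⁻¹ t = t + 1 := rfl
lemma permB_apply (t : ℝ) : permB t = Cfun t := rfl
lemma permB_inv_apply (t : ℝ) : permB⁻¹ t = Cinv t := rfl

lemma permA_zpow (n : ℤ) : ∀ t : ℝ, (permA ^ n) t = t - n := by
  induction n using Int.induction_on with
  | zero => intro t; simp
  | succ k ih =>
      intro t
      rw [zpow_add_one, Equiv.Perm.mul_apply, ih, permA_apply]
      push_cast; ring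
  | pred k ih =>
      intro t
      rw [zpow_sub_one, Equiv.Perm.mul_apply, ih, permA_inv_apply]
      push_cast; ring

noncomputable def thompsonGens : Fin 2 → Equiv.Perm ℝ := ![permA, permB]

lemma comm1_s14 : (permA * permB⁻¹) * (permA⁻¹ * permB * permA)
    = (permA⁻¹ * permB * permA) * (permA * permB⁻¹) := by
  ext t
  simp only [Equiv.Perm.mul_apply, permA_apply, permA_inv_apply, permB_apply, permB_inv_apply,
    Cfun, Cinv]
  split_ifs <;> linarith

set_option maxHeartbeats 1600000 in
lemma comm2_s14 : (permA * permB⁻¹) * (permA⁻¹ ^ 2 * permB * permA ^ 2)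
    = (permA⁻¹ ^ 2 * permB * permA ^ 2) * (permA * permB⁻¹) := by
  ext t
  simp only [pow_two, Equiv.Perm.mul_apply, permA_apply, permA_inv_apply, permB_apply,
    permB_inv_apply, Cfun, Cinv]
  split_ifs <;> linarith

lemma rels_hold : ∀ r ∈ thompsonRels, FreeGroup.lift thompsonGens r = 1 := by
  intro r hr
  simp only [thompsonRels, Set.mem_insert_iff, Set.mem_singleton_iff] at hr
  rcases hr with rfl | rfl <;>
    · rw [map_commutatorElement, commutatorElement_eq_one_iff_mul_comm]
      simp only [map_mul, map_inv, map_pow, FreeGroup.lift_apply_of, thompsonGens,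
        Matrix.cons_val_zero, Matrix.cons_val_one, Matrix.head_cons]
      first
        | exact comm1_s14
        | exact comm2_s14

noncomputable def φF : ThompsonF →* Equiv.Perm ℝ := PresentedGroup.toGroup rels_hold

lemma φF_x₀ : φF x₀ = permA := by
  have := PresentedGroup.toGroup.of (f := thompsonGens) rels_hold (x := (0 : Fin 2))
  simp only [thompsonGens, x₀, φF] at this ⊢; exact this

lemma φF_x₁ : φF x₁ = permB := by
  have := PresentedGroup.toGroup.of (f := thompsonGens) rels_hold (x := (1 : Fin 2))
  simp only [thompsonGens, x₁, φF] at this ⊢; exact this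

lemma Cfun_of_nonpos {x : ℝ} (hx : x ≤ 0) : Cfun x = x := if_pos hx

lemma Cfun_fixed {x : ℝ} (hx : Cfun x = x) : x ≤ 0 := by
  unfold Cfun at hx
  split_ifs at hx <;> linarith

lemma key_lemma (i j h h' : ℤ) (heq : x₀ ^ i * x₁ * x₀ ^ h = x₀ ^ j * x₁ * x₀ ^ h') :
    i = j ∧ h = h' := by
  have P : φF (x₀ ^ i * x₁ * x₀ ^ h) = φF (x₀ ^ j * x₁ * x₀ ^ h') := by rw [heq]
  simp only [map_mul, map_zpow, φF_x₀, φF_x₁] at P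
  have H : ∀ t : ℝ, Cfun (t - h) - i = Cfun (t - h') - j := by
    intro t
    have := Equiv.ext_iff.mp P t
    simpa only [Equiv.Perm.mul_apply, permA_zpow, permB_apply] using this
  have hE : (h : ℝ) + i = (h' : ℝ) + j := by
    have h1 : min (h : ℝ) (h' : ℝ) - h ≤ 0 := by
      have := min_le_left (h : ℝ) (h' : ℝ); linarith
    have h2 : min (h : ℝ) (h' : ℝ) - h' ≤ 0 := by
      have := min_le_right (h : ℝ) (h' : ℝ); linarith
    have := H (min (h : ℝ) (h' : ℝ))
    rw [Cfun_of_nonpos h1, Cfun_of_nonpos h2] at this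
    linarith
  have hC0 : Cfun 0 = 0 := Cfun_of_nonpos le_rfl
  have E2 : Cfun ((h' : ℝ) - h) = (h' : ℝ) - h := by
    have := H (h' : ℝ)
    rw [show ((h' : ℝ) - h') = 0 by ring, hC0] at this
    linarith
  have E3 : Cfun ((h : ℝ) - h') = (h : ℝ) - h' := by
    have := H (h : ℝ)
    rw [show ((h : ℝ) - h) = 0 by ring, hC0] at this
    linarith
  have l1 := Cfun_fixed E2
  have l2 := Cfun_fixed E3
  have hh : (h : ℝ) = h' := by linarith
  have hij : (i : ℝ) = j := by linarith
  exact ⟨by exact_mod_cast hij, by exact_mod_cast hh⟩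

/-- the map `(a, b) ↦ x₀^a x₁ x₀^b` from `ℤ × ℤ` to `F` is injective;
in particular `x₀ⁱx₁x₀ʰ = x₀ʲx₁x₀^{h'}` forces `i = j` and `h = h'`. -/
theorem statement14 :
    Function.Injective (fun p : ℤ × ℤ => x₀ ^ p.1 * x₁ * x₀ ^ p.2) ∧
    ∀ i j h h' : ℤ, x₀ ^ i * x₁ * x₀ ^ h = x₀ ^ j * x₁ * x₀ ^ h' → i = j ∧ h = h' := by
  refine ⟨?_, fun i j h h' heq => key_lemma i j h h' heq⟩
  intro p q hpq
  obtain ⟨h1, h2⟩ := key_lemma p.1 q.1 p.2 q.2 hpq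
  exact Prod.ext h1 h2
end
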